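/- Let Δ_D and Δ_A be nonempty compact convex subsets of ℝⁿ with 0 ∈ Δ_A, with lower support functions g_{Δ_D}(u) = min_{v ∈ Δ_D} ⟨v, u⟩ and g_{Δ_A}(u) = min_{v ∈ Δ_A} ⟨v, u⟩. Let g_D, g_A : ℝⁿ → ℝ be functions such that sup_{u ∈ ℝⁿ} |g_D(u) − g_{Δ_D}(u)| and sup_{u ∈ ℝⁿ} |g_A(u) − g_{Δ_A}(u)| are finite. Then lim_{l → ∞, l ∈ ℕ} (1/l^{n+1}) ∫_{lΔ_D + Δ_A} (l g_D + g_A)ˇ(x) dx = ∫_{Δ_D} (g_D)ˇ(x) dx, where lΔ_D + Δ_A = {l v + w : v ∈ Δ_D, w ∈ Δ_A} is the Minkowski sum (on which the transform (l g_D + g_A)ˇ is finite) and integrals are with respect to Lebesgue measure. -/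

import Mathlib

open MeasureTheory Pointwise Topology

/-- Standard inner (dot) product on ℝⁿ. -/
noncomputable def dotp {n : ℕ} (x u : Fin n → ℝ) : ℝ := ∑ i, x i * u i

/-- Concave Legendre–Fenchel transform ǧ(x) = inf_u (⟨x,u⟩ − g(u)), valued in [−∞,∞). -/
noncomputable def lfT {n : ℕ} (g : (Fin n → ℝ) → ℝ) (x : Fin n → ℝ) : EReal :=
  ⨅ u : Fin n → ℝ, ((dotp x u - g u : ℝ) : EReal)

/-- Lower support function of a set Δ: g_Δ(u) = inf_{v ∈ Δ} ⟨v,u⟩. -/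
noncomputable def lsf {n : ℕ} (Δ : Set (Fin n → ℝ)) (u : Fin n → ℝ) : ℝ :=
  sInf ((fun v => dotp v u) '' Δ)

namespace Aux
variable {n : ℕ}

lemma dotp_comm (x u : Fin n → ℝ) : dotp x u = dotp u x := by
  unfold dotp; exact Finset.sum_congr rfl fun i _ => mul_comm _ _

lemma dotp_add_left (x y u : Fin n → ℝ) : dotp (x + y) u = dotp x u + dotp y u := by
  unfold dotp; rw [← Finset.sum_add_distrib]; exact Finset.sum_congr rfl fun i _ => by
    simp [add_mul]

lemma dotp_smul_left (a : ℝ) (x u : Fin n → ℝ) : dotp (a • x) u = a * dotp x u := by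
  unfold dotp; rw [Finset.mul_sum]; exact Finset.sum_congr rfl fun i _ => by
    simp [mul_assoc]

lemma dotp_zero_right (x : Fin n → ℝ) : dotp x 0 = 0 := by unfold dotp; simp

lemma dotp_zero_left (u : Fin n → ℝ) : dotp 0 u = 0 := by unfold dotp; simp

lemma continuous_dotp_left (u : Fin n → ℝ) : Continuous fun x : Fin n → ℝ => dotp x u := by
  unfold dotp
  exact continuous_finset_sum _ fun i _ => (continuous_apply i).mul continuous_const

/-- ℓ¹ norm helper -/
noncomputable def l1 (u : Fin n → ℝ) : ℝ := ∑ i, |u i|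

lemma l1_nonneg (u : Fin n → ℝ) : 0 ≤ l1 u :=
  Finset.sum_nonneg fun i _ => abs_nonneg _

lemma dotp_ge_neg_l1 {R : ℝ} {w u : Fin n → ℝ} (hw : ∀ i, |w i| ≤ R) :
    -(R * l1 u) ≤ dotp w u := by
  unfold dotp l1
  rw [Finset.mul_sum, ← Finset.sum_neg_distrib]
  refine Finset.sum_le_sum fun i _ => ?_
  have h1 : |w i * u i| ≤ R * |u i| := by
    rw [abs_mul]
    exact mul_le_mul_of_nonneg_right (hw i) (abs_nonneg _)
  nlinarith [neg_abs_le (w i * u i)]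

section lsfFacts
variable {Δ : Set (Fin n → ℝ)}

lemma lsf_bddBelow (hc : IsCompact Δ) (u : Fin n → ℝ) :
    BddBelow ((fun v => dotp v u) '' Δ) :=
  (hc.image ((continuous_dotp_left u).comp continuous_id)).bddBelow

lemma lsf_le (hc : IsCompact Δ) {v : Fin n → ℝ} (hv : v ∈ Δ) (u : Fin n → ℝ) :
    lsf Δ u ≤ dotp v u :=
  csInf_le (lsf_bddBelow hc u) ⟨v, hv, rfl⟩

lemma exists_lsf_eq (hne : Δ.Nonempty) (hc : IsCompact Δ) (u : Fin n → ℝ) :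
    ∃ v ∈ Δ, lsf Δ u = dotp v u := by
  have hcont : ContinuousOn (fun v : Fin n → ℝ => dotp v u) Δ := by
    intro v _
    exact ((continuous_dotp_left u).congr (fun x => by rw [dotp_comm])).continuousWithinAt
  obtain ⟨v, hv, hmin⟩ := hc.exists_isMinOn hne hcont
  refine ⟨v, hv, le_antisymm (lsf_le hc hv u) ?_⟩
  exact le_csInf ⟨_, ⟨v, hv, rfl⟩⟩ (by rintro b ⟨w, hw, rfl⟩; exact hmin hw)

lemma le_lsf (hne : Δ.Nonempty) (hc : IsCompact Δ) {u : Fin n → ℝ} {b : ℝ}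
    (h : ∀ v ∈ Δ, b ≤ dotp v u) : b ≤ lsf Δ u := by
  obtain ⟨v, hv, he⟩ := exists_lsf_eq hne hc u
  rw [he]; exact h v hv

lemma lsf_zero (hne : Δ.Nonempty) (hc : IsCompact Δ) : lsf Δ 0 = 0 := by
  obtain ⟨v, hv, he⟩ := exists_lsf_eq hne hc 0
  rw [he, dotp_zero_right]

end lsfFacts

lemma dotp_repr (f : (Fin n → ℝ) →L[ℝ] ℝ) (y : Fin n → ℝ) :
    f y = dotp y (fun i => f (Pi.single i 1)) := by
  have hy : y = ∑ i, y i • (Pi.single i (1:ℝ) : Fin n → ℝ) := by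
    have h1 : ∀ i, y i • (Pi.single i (1:ℝ) : Fin n → ℝ) = Pi.single i (y i) := by
      intro i; funext j
      by_cases h : j = i <;> simp [Pi.single_apply, h]
    simp_rw [h1]
    exact (Finset.univ_sum_single y).symm
  conv_lhs => rw [hy]
  rw [map_sum]
  unfold dotp
  refine Finset.sum_congr rfl fun i _ => ?_
  rw [_root_.map_smul, smul_eq_mul]

lemma exists_sep {S : Set (Fin n → ℝ)} (hne : S.Nonempty) (hc : IsCompact S)
    (hconv : Convex ℝ S) {x : Fin n → ℝ} (hx : x ∉ S) :
    ∃ u, dotp x u < lsf S u := by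
  obtain ⟨f, c, hxc, hSc⟩ := geometric_hahn_banach_point_closed hconv hc.isClosed hx
  refine ⟨fun i => f (Pi.single i 1), ?_⟩
  calc dotp x (fun i => f (Pi.single i 1)) = f x := (dotp_repr f x).symm
    _ < c := hxc
    _ ≤ lsf S _ := le_lsf hne hc fun v hv => by
        rw [← dotp_repr]; exact (hSc v hv).le

section lfTFacts
variable {g : (Fin n → ℝ) → ℝ} {x : Fin n → ℝ}

lemma lfT_le (g : (Fin n → ℝ) → ℝ) (x u : Fin n → ℝ) :
    lfT g x ≤ ((dotp x u - g u : ℝ) : EReal) := iInf_le _ u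

lemma lfT_eq_bot (h : ∀ M : ℝ, ∃ u, dotp x u - g u < M) : lfT g x = ⊥ := by
  refine iInf_eq_bot.2 fun b hb => ?_
  obtain ⟨m, _, hmb⟩ := EReal.lt_iff_exists_real_btwn.mp hb
  obtain ⟨u, hu⟩ := h m
  exact ⟨u, lt_trans (EReal.coe_lt_coe_iff.2 hu) hmb⟩

lemma lfT_eq_coe (hb : BddBelow (Set.range fun u => dotp x u - g u)) :
    lfT g x = ((sInf (Set.range fun u => dotp x u - g u) : ℝ) : EReal) := by
  refine le_antisymm ?_ (le_iInf fun u => EReal.coe_le_coe_iff.2 (csInf_le hb ⟨u, rfl⟩))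
  by_contra hlt
  push_neg at hlt
  obtain ⟨m, hcm, hm⟩ := EReal.lt_iff_exists_real_btwn.mp hlt
  have hcm' : sInf (Set.range fun u => dotp x u - g u) < m := EReal.coe_lt_coe_iff.mp hcm
  obtain ⟨a, ⟨u, rfl⟩, hu⟩ := exists_lt_of_csInf_lt ⟨_, Set.mem_range_self 0⟩ hcm'
  have h2 : lfT g x < (m : EReal) := (lfT_le g x u).trans_lt (EReal.coe_lt_coe_iff.2 hu)
  exact absurd (hm.trans h2) (lt_irrefl _)

lemma lfT_toReal_eq (hb : BddBelow (Set.range fun u => dotp x u - g u)) :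
    (lfT g x).toReal = sInf (Set.range fun u => dotp x u - g u) := by
  rw [lfT_eq_coe hb]; exact EReal.toReal_coe _

end lfTFacts

lemma lfT_measurable (g : (Fin n → ℝ) → ℝ) : Measurable fun x => lfT g x := by
  apply measurable_of_Iio
  intro c
  have hset : (fun x => lfT g x) ⁻¹' Set.Iio c
      = ⋃ u, (fun x => ((dotp x u - g u : ℝ) : EReal)) ⁻¹' Set.Iio c := by
    ext x
    simp only [Set.mem_preimage, Set.mem_Iio, Set.mem_iUnion, lfT, iInf_lt_iff]
  rw [hset]
  have : IsOpen (⋃ u, (fun x => ((dotp x u - g u : ℝ) : EReal)) ⁻¹' Set.Iio c) :=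
    isOpen_iUnion fun u =>
      (continuous_coe_real_ereal.comp
        ((continuous_dotp_left u).sub continuous_const)).isOpen_preimage _ isOpen_Iio
  exact this.measurableSet

lemma lfT_toReal_measurable (g : (Fin n → ℝ) → ℝ) :
    Measurable fun x => (lfT g x).toReal := (lfT_measurable g).ereal_toReal


lemma dotp_smul_right (a : ℝ) (x u : Fin n → ℝ) : dotp x (a • u) = a * dotp x u := by
  rw [dotp_comm, dotp_smul_left, dotp_comm]

lemma lsf_smul {Δ : Set (Fin n → ℝ)} (hne : Δ.Nonempty) (hc : IsCompact Δ)
    {t : ℝ} (ht : 0 ≤ t) (u : Fin n → ℝ) : lsf Δ (t • u) = t * lsf Δ u := by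
  obtain ⟨v, hv, hveq⟩ := exists_lsf_eq hne hc (t • u)
  obtain ⟨w, hw, hweq⟩ := exists_lsf_eq hne hc u
  apply le_antisymm
  · calc lsf Δ (t • u) ≤ dotp w (t • u) := lsf_le hc hw _
      _ = t * dotp w u := dotp_smul_right t w u
      _ = t * lsf Δ u := by rw [hweq]
  · calc t * lsf Δ u ≤ t * dotp v u := mul_le_mul_of_nonneg_left (lsf_le hc hv _) ht
      _ = dotp v (t • u) := (dotp_smul_right t v u).symm
      _ = lsf Δ (t • u) := hveq.symm

section SetLemmas
variable {ΔD ΔA : Set (Fin n → ℝ)} {l : ℝ}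

lemma smul_add_nonempty (hDne : ΔD.Nonempty) (hAne : ΔA.Nonempty) :
    (l • ΔD + ΔA).Nonempty := by
  obtain ⟨v, hv⟩ := hDne; obtain ⟨w, hw⟩ := hAne
  exact ⟨_, Set.add_mem_add (Set.smul_mem_smul_set hv) hw⟩

lemma smul_add_compact (hDc : IsCompact ΔD) (hAc : IsCompact ΔA) :
    IsCompact (l • ΔD + ΔA) := by
  have h1 : IsCompact (l • ΔD) := by
    rw [← Set.image_smul]; exact hDc.image (continuous_const_smul l)
  exact h1.add hAc

end SetLemmas

section MainLemmas
variable {ΔD ΔA : Set (Fin n → ℝ)}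
variable (hDne : ΔD.Nonempty) (hDc : IsCompact ΔD) (hDconv : Convex ℝ ΔD)
variable (hAne : ΔA.Nonempty) (hAc : IsCompact ΔA) (hAconv : Convex ℝ ΔA)
variable {gD gA : (Fin n → ℝ) → ℝ} {CD CA : ℝ}
variable (hCD : ∀ u, |gD u - lsf ΔD u| ≤ CD) (hCA : ∀ u, |gA u - lsf ΔA u| ≤ CA)

include hDne hDc hDconv hAne hAc hAconv hCD hCA in
lemma lfT_vanish {l : ℝ} (hl : 0 ≤ l) {x : Fin n → ℝ} (hx : x ∉ l • ΔD + ΔA) :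
    lfT (fun u => l * gD u + gA u) x = ⊥ := by
  have hSne : (l • ΔD + ΔA).Nonempty := smul_add_nonempty hDne hAne
  have hSc : IsCompact (l • ΔD + ΔA) := smul_add_compact hDc hAc
  have hSconv : Convex ℝ (l • ΔD + ΔA) := (hDconv.smul l).add hAconv
  obtain ⟨u0, hu0⟩ := exists_sep hSne hSc hSconv hx
  have hkey : lsf (l • ΔD + ΔA) u0 ≤ l * lsf ΔD u0 + lsf ΔA u0 := by
    obtain ⟨v, hv, hveq⟩ := exists_lsf_eq hDne hDc u0
    obtain ⟨w, hw, hweq⟩ := exists_lsf_eq hAne hAc u0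
    calc lsf (l • ΔD + ΔA) u0 ≤ dotp (l • v + w) u0 :=
          lsf_le hSc (Set.add_mem_add (Set.smul_mem_smul_set hv) hw) u0
      _ = l * dotp v u0 + dotp w u0 := by rw [dotp_add_left, dotp_smul_left]
      _ = l * lsf ΔD u0 + lsf ΔA u0 := by rw [hveq, hweq]
  apply lfT_eq_bot
  intro M
  set δ := lsf (l • ΔD + ΔA) u0 - dotp x u0 with hδdef
  have hδ : 0 < δ := sub_pos.2 hu0
  set t := max ((l * CD + CA - M) / δ + 1) 1 with htdef
  have ht1 : (1:ℝ) ≤ t := le_max_right _ _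
  have ht0 : (0:ℝ) ≤ t := le_trans zero_le_one ht1
  have htgt : (l * CD + CA - M) / δ < t :=
    lt_of_lt_of_le (lt_add_one _) (le_max_left _ _)
  have htδ : l * CD + CA - M < t * δ := by
    rw [div_lt_iff₀ hδ] at htgt; linarith
  refine ⟨t • u0, ?_⟩
  have hgD : lsf ΔD (t • u0) - CD ≤ gD (t • u0) := by
    have := abs_le.1 (hCD (t • u0)); linarith [this.1, this.2]
  have hgA : lsf ΔA (t • u0) - CA ≤ gA (t • u0) := by
    have := abs_le.1 (hCA (t • u0)); linarith [this.1, this.2]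
  have hsD : lsf ΔD (t • u0) = t * lsf ΔD u0 := lsf_smul hDne hDc ht0 u0
  have hsA : lsf ΔA (t • u0) = t * lsf ΔA u0 := lsf_smul hAne hAc ht0 u0
  have hdxt : dotp x (t • u0) = t * dotp x u0 := dotp_smul_right t x u0
  rw [hsD] at hgD
  rw [hsA] at hgA
  have hlg : l * (t * lsf ΔD u0 - CD) ≤ l * gD (t • u0) :=
    mul_le_mul_of_nonneg_left hgD hl
  have hfin : t * lsf (l • ΔD + ΔA) u0 ≤ t * (l * lsf ΔD u0 + lsf ΔA u0) :=
    mul_le_mul_of_nonneg_left hkey ht0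
  have hδx : t * lsf (l • ΔD + ΔA) u0 = t * dotp x u0 + t * δ := by
    rw [hδdef]; ring
  rw [hdxt]
  nlinarith [hlg, hgA, hfin, htδ, hδx]

include hDne hDc hAne hAc hCD hCA in
lemma bounds_inside {l : ℝ} (hl : 0 ≤ l) {x : Fin n → ℝ} (hx : x ∈ l • ΔD + ΔA) :
    BddBelow (Set.range fun u => dotp x u - (l * gD u + gA u)) ∧
    -(l * CD + CA) ≤ sInf (Set.range fun u => dotp x u - (l * gD u + gA u)) ∧
    sInf (Set.range fun u => dotp x u - (l * gD u + gA u)) ≤ l * CD + CA := by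
  rw [Set.mem_add] at hx
  obtain ⟨y, hy, w, hw, rfl⟩ := hx
  obtain ⟨v, hv, rfl⟩ := Set.mem_smul_set.1 hy
  have hlow : ∀ u, -(l * CD + CA) ≤ dotp (l • v + w) u - (l * gD u + gA u) := by
    intro u
    have h1 : lsf ΔD u ≤ dotp v u := lsf_le hDc hv u
    have h2 : lsf ΔA u ≤ dotp w u := lsf_le hAc hw u
    have h3 := abs_le.1 (hCD u)
    have h4 := abs_le.1 (hCA u)
    have h5 : dotp (l • v + w) u = l * dotp v u + dotp w u := by
      rw [dotp_add_left, dotp_smul_left]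
    have h6 : l * gD u ≤ l * (lsf ΔD u + CD) :=
      mul_le_mul_of_nonneg_left (by linarith [h3.2]) hl
    have h7 : l * lsf ΔD u ≤ l * dotp v u := mul_le_mul_of_nonneg_left h1 hl
    rw [h5]; nlinarith [h3.1, h3.2, h4.1, h4.2]
  have hbdd : BddBelow (Set.range fun u => dotp (l • v + w) u - (l * gD u + gA u)) :=
    ⟨-(l * CD + CA), by rintro a ⟨u, rfl⟩; exact hlow u⟩
  refine ⟨hbdd, le_csInf ⟨_, Set.mem_range_self 0⟩ (by rintro a ⟨u, rfl⟩; exact hlow u), ?_⟩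
  have hval0 : dotp (l • v + w) 0 - (l * gD 0 + gA 0) = -(l * gD 0 + gA 0) := by
    rw [dotp_zero_right]; ring
  have h3 := abs_le.1 (hCD 0)
  have h4 := abs_le.1 (hCA 0)
  have hz : lsf ΔD 0 = 0 := lsf_zero hDne hDc
  have hz' : lsf ΔA 0 = 0 := lsf_zero hAne hAc
  rw [hz] at h3; rw [hz'] at h4
  calc sInf (Set.range fun u => dotp (l • v + w) u - (l * gD u + gA u))
      ≤ dotp (l • v + w) 0 - (l * gD 0 + gA 0) := csInf_le hbdd ⟨0, rfl⟩
    _ ≤ l * CD + CA := by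
        rw [hval0]
        have h6 : l * (-CD) ≤ l * gD 0 := mul_le_mul_of_nonneg_left (by linarith [h3.1]) hl
        nlinarith [h4.1]

include hDne hDc hAne hAc hCD hCA in
lemma inside_toReal {l : ℝ} (hl : 0 ≤ l) {x : Fin n → ℝ} (hx : x ∈ l • ΔD + ΔA) :
    (lfT (fun u => l * gD u + gA u) x).toReal
      = sInf (Set.range fun u => dotp x u - (l * gD u + gA u)) ∧
    |(lfT (fun u => l * gD u + gA u) x).toReal| ≤ l * CD + CA := by
  obtain ⟨hbdd, hlow, hup⟩ := bounds_inside hDne hDc hAne hAc hCD hCA hl hx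
  have heq := lfT_toReal_eq (g := fun u => l * gD u + gA u) (x := x) hbdd
  refine ⟨heq, ?_⟩
  rw [heq, abs_le]
  exact ⟨by linarith, hup⟩

include hDne hDc hAne hAc hCD hCA in
lemma pointwise_conv {R : ℝ} (hR : ∀ w ∈ ΔA, ∀ i, |w i| ≤ R)
    (hCD0 : 0 ≤ CD) (hCA0 : 0 ≤ CA) (hR0 : 0 ≤ R)
    (h0A : (0 : Fin n → ℝ) ∈ ΔA) {y : Fin n → ℝ} (hy : y ∈ ΔD) :
    Filter.Tendsto (fun l : ℕ =>
        (1 / (l : ℝ)) * (lfT (fun u => (l : ℝ) * gD u + gA u) ((l : ℝ) • y)).toReal)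
      Filter.atTop (nhds ((lfT gD y).toReal)) := by
  -- the transform of gD at y, as a real infimum
  have hbddy : BddBelow (Set.range fun u => dotp y u - gD u) := by
    refine ⟨-CD, ?_⟩
    rintro a ⟨u, rfl⟩
    have h1 : lsf ΔD u ≤ dotp y u := lsf_le hDc hy u
    have h3 := abs_le.1 (hCD u)
    simp only
    linarith [h3.2]
  have hceq : (lfT gD y).toReal = sInf (Set.range fun u => dotp y u - gD u) := by
    have := lfT_toReal_eq (g := gD) (x := y) hbddy
    simpa using this
  set c := sInf (Set.range fun u => dotp y u - gD u) with hcdef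
  rw [hceq]
  -- lsf ΔA is ≤ 0 and ≥ -R * l1
  have hlsfA_le : ∀ u, lsf ΔA u ≤ 0 := by
    intro u
    have := lsf_le hAc h0A u
    rwa [dotp_zero_left] at this
  have hlsfA_ge : ∀ u, -(R * l1 u) ≤ lsf ΔA u := by
    intro u
    exact le_lsf hAne hAc fun w hw => dotp_ge_neg_l1 (hR w hw)
  rw [Metric.tendsto_atTop]
  intro ε hε
  -- near minimizer u₀
  obtain ⟨a, ⟨u₀, rfl⟩, hu₀⟩ := exists_lt_of_csInf_lt
    (Set.range_nonempty (f := fun u => dotp y u - gD u)) (lt_add_of_pos_right c (by linarith : (0:ℝ) < ε/2))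
  set B := CA + R * l1 u₀ + 1 with hBdef
  have hB0 : 0 < B := by
    have := l1_nonneg u₀
    nlinarith
  obtain ⟨N₀, hN₀⟩ := exists_nat_gt (2 * B / ε)
  refine ⟨max N₀ 1, fun l hl => ?_⟩
  have hl1 : 1 ≤ l := le_trans (le_max_right N₀ 1) hl
  have hlN₀ : (N₀ : ℝ) ≤ (l : ℝ) := by
    exact_mod_cast le_trans (le_max_left N₀ 1) hl
  set L := (l : ℝ) with hLdef
  have hL1 : 1 ≤ L := by rw [hLdef]; exact_mod_cast hl1
  have hL0 : 0 < L := lt_of_lt_of_le zero_lt_one hL1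
  have hLB : 2 * B / ε < L := lt_of_lt_of_le hN₀ hlN₀
  have hLε : 2 * B < L * ε := by
    rw [div_lt_iff₀ hε] at hLB
    nlinarith
  -- membership of L • y in the sum set
  have hxmem : L • y ∈ L • ΔD + ΔA := by
    have := Set.add_mem_add (Set.smul_mem_smul_set (a := L) hy) h0A
    rwa [add_zero] at this
  obtain ⟨hbddl, hlowl, hupl⟩ :=
    bounds_inside hDne hDc hAne hAc hCD hCA (le_of_lt hL0) hxmem
  have heql := lfT_toReal_eq (g := fun u => L * gD u + gA u) (x := L • y) hbddl
  set I := sInf (Set.range fun u => dotp (L • y) u - (L * gD u + gA u)) with hIdef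
  rw [heql]
  -- lower bound for I
  have hIlow : L * c - CA ≤ I := by
    apply le_csInf (Set.range_nonempty _)
    rintro a ⟨u, rfl⟩
    have h1 : c ≤ dotp y u - gD u := csInf_le hbddy ⟨u, rfl⟩
    have h2 : gA u ≤ CA := by
      have h3 := abs_le.1 (hCA u)
      linarith [hlsfA_le u, h3.2]
    have h4 : dotp (L • y) u = L * dotp y u := dotp_smul_left L y u
    have h5 : L * c ≤ L * (dotp y u - gD u) := mul_le_mul_of_nonneg_left h1 (le_of_lt hL0)
    simp only [h4]
    nlinarith
  -- upper bound for I
  have hIup : I ≤ L * (c + ε / 2) + (CA + R * l1 u₀) := by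
    have hmem : dotp (L • y) u₀ - (L * gD u₀ + gA u₀)
        ∈ Set.range fun u => dotp (L • y) u - (L * gD u + gA u) := ⟨u₀, rfl⟩
    have h4 : dotp (L • y) u₀ = L * dotp y u₀ := dotp_smul_left L y u₀
    have h2 : -gA u₀ ≤ CA + R * l1 u₀ := by
      have h3 := abs_le.1 (hCA u₀)
      linarith [hlsfA_ge u₀, h3.1]
    have h5 : L * (dotp y u₀ - gD u₀) ≤ L * (c + ε / 2) :=
      mul_le_mul_of_nonneg_left (le_of_lt hu₀) (le_of_lt hL0)
    calc I ≤ dotp (L • y) u₀ - (L * gD u₀ + gA u₀) := csInf_le hbddl hmem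
      _ = L * (dotp y u₀ - gD u₀) + (- gA u₀) := by rw [h4]; ring
      _ ≤ L * (c + ε / 2) + (CA + R * l1 u₀) := by linarith
  -- conclude
  rw [Real.dist_eq, abs_lt]
  have hrw : 1 / L * I - c = (I - L * c) / L := by
    field_simp
  constructor
  · rw [hrw, lt_div_iff₀ hL0]
    nlinarith [hIlow, hLε, hB0, l1_nonneg u₀]
  · rw [hrw, div_lt_iff₀ hL0]
    nlinarith [hIup, hLε]
include hDne hDc hDconv hAne hAc hAconv hCD hCA in
lemma fl_integrable {l : ℝ} (hl : 0 ≤ l) :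
    Integrable (fun x => (lfT (fun u => l * gD u + gA u) x).toReal) := by
  have hSc : IsCompact (l • ΔD + ΔA) := smul_add_compact hDc hAc
  have hSm : MeasurableSet (l • ΔD + ΔA) := hSc.isClosed.measurableSet
  apply Integrable.mono' (g := (l • ΔD + ΔA).indicator fun _ => l * CD + CA)
  · rw [integrable_indicator_iff hSm]
    exact integrableOn_const hSc.measure_lt_top.ne
  · exact (lfT_toReal_measurable _).aestronglyMeasurable
  · apply Filter.Eventually.of_forall
    intro x
    by_cases hx : x ∈ l • ΔD + ΔA
    · rw [Set.indicator_of_mem hx, Real.norm_eq_abs]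
      exact (inside_toReal hDne hDc hAne hAc hCD hCA hl hx).2
    · rw [Set.indicator_of_notMem hx, Real.norm_eq_abs,
        lfT_vanish hDne hDc hDconv hAne hAc hAconv hCD hCA hl hx]
      simp

end MainLemmas

lemma smul_mem_smul_add_iff {ΔD ΔA : Set (Fin n → ℝ)} {L : ℝ} (hL : L ≠ 0) (y : Fin n → ℝ) :
    L • y ∈ L • ΔD + ΔA ↔ y ∈ ΔD + L⁻¹ • ΔA := by
  constructor
  · intro h
    rw [Set.mem_add] at h
    obtain ⟨a, ha, w, hw, heq⟩ := h
    obtain ⟨v, hv, rfl⟩ := Set.mem_smul_set.1 ha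
    have hy : y = v + L⁻¹ • w := by
      apply smul_right_injective (Fin n → ℝ) hL
      show L • y = L • (v + L⁻¹ • w)
      rw [smul_add, smul_inv_smul₀ hL]
      exact heq.symm
    rw [hy]
    exact Set.add_mem_add hv (Set.smul_mem_smul_set hw)
  · intro h
    rw [Set.mem_add] at h
    obtain ⟨v, hv, z, hz, rfl⟩ := h
    obtain ⟨w, hw, rfl⟩ := Set.mem_smul_set.1 hz
    rw [smul_add, smul_inv_smul₀ hL]
    exact Set.add_mem_add (Set.smul_mem_smul_set hv) hw

lemma add_subset_cthickening {ΔD ΔA : Set (Fin n → ℝ)} {R L : ℝ} (hL : 0 < L)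
    (hR : ∀ w ∈ ΔA, ‖w‖ ≤ R) :
    ΔD + L⁻¹ • ΔA ⊆ Metric.cthickening (R / L) ΔD := by
  intro x hx
  rw [Set.mem_add] at hx
  obtain ⟨v, hv, z, hz, rfl⟩ := hx
  obtain ⟨w, hw, rfl⟩ := Set.mem_smul_set.1 hz
  apply Metric.mem_cthickening_of_dist_le _ v _ _ hv
  rw [dist_eq_norm, add_sub_cancel_left, norm_smul, norm_inv, Real.norm_eq_abs,
    abs_of_pos hL, div_eq_inv_mul]
  exact mul_le_mul_of_nonneg_left (hR w hw) (inv_nonneg.2 hL.le)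

lemma subset_add_of_zero_mem {ΔD ΔA : Set (Fin n → ℝ)} {L : ℝ}
    (h0A : (0 : Fin n → ℝ) ∈ ΔA) : ΔD ⊆ ΔD + L⁻¹ • ΔA := by
  intro y hy
  have := Set.add_mem_add hy (Set.smul_mem_smul_set (a := L⁻¹) h0A)
  rwa [smul_zero, add_zero] at this


section SliceEq
variable {ΔD ΔA : Set (Fin n → ℝ)}
variable (hDne : ΔD.Nonempty) (hDc : IsCompact ΔD) (hDconv : Convex ℝ ΔD)
variable (hAne : ΔA.Nonempty) (hAc : IsCompact ΔA) (hAconv : Convex ℝ ΔA)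
variable {gD gA : (Fin n → ℝ) → ℝ} {CD CA : ℝ}
variable (hCD : ∀ u, |gD u - lsf ΔD u| ≤ CD) (hCA : ∀ u, |gA u - lsf ΔA u| ≤ CA)

include hDne hDc hDconv hAne hAc hAconv hCD hCA in
lemma slice_eq {L : ℝ} (hL : 0 < L) (h0A : (0 : Fin n → ℝ) ∈ ΔA) :
    (1 / L ^ (n + 1)) * ∫ x in L • ΔD + ΔA, (lfT (fun u => L * gD u + gA u) x).toReal
      = (∫ y in ΔD, (1 / L) * (lfT (fun u => L * gD u + gA u) (L • y)).toReal)
        + ∫ y in (ΔD + L⁻¹ • ΔA) \ ΔD,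
            (1 / L) * (lfT (fun u => L * gD u + gA u) (L • y)).toReal := by
  set f : (Fin n → ℝ) → ℝ := fun x => (lfT (fun u => L * gD u + gA u) x).toReal with hf
  have hint : Integrable f := fl_integrable hDne hDc hDconv hAne hAc hAconv hCD hCA hL.le
  have hzero : ∀ x ∉ L • ΔD + ΔA, f x = 0 := by
    intro x hx
    simp only [hf, lfT_vanish hDne hDc hDconv hAne hAc hAconv hCD hCA hL.le hx]
    simp
  have e1 : ∫ x in L • ΔD + ΔA, f x = ∫ x, f x :=
    setIntegral_eq_integral_of_forall_compl_eq_zero hzero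
  have e2 : ∫ y, f (L • y) = (L ^ n)⁻¹ * ∫ x, f x := by
    have h := Measure.integral_comp_smul (volume : Measure (Fin n → ℝ)) f L
    rw [Module.finrank_fin_fun ℝ, smul_eq_mul,
      abs_of_pos (by positivity : (0:ℝ) < (L ^ n)⁻¹)] at h
    exact h
  have hvan2 : ∀ y ∉ ΔD + L⁻¹ • ΔA, (1 / L) * f (L • y) = 0 := by
    intro y hy
    have hx : L • y ∉ L • ΔD + ΔA := fun hmem => hy ((smul_mem_smul_add_iff hL.ne' y).1 hmem)
    rw [hzero _ hx, mul_zero]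
  have hTc : IsCompact (ΔD + L⁻¹ • ΔA) := by
    have h1 : IsCompact (L⁻¹ • ΔA) := by
      rw [← Set.image_smul]; exact hAc.image (continuous_const_smul _)
    exact hDc.add h1
  have hFlint : Integrable (fun y => (1 / L) * f (L • y)) :=
    (hint.comp_smul hL.ne').const_mul _
  have hDsub : ΔD ⊆ ΔD + L⁻¹ • ΔA := subset_add_of_zero_mem h0A
  have e3 : ∫ y, (1 / L) * f (L • y) = ∫ y in ΔD + L⁻¹ • ΔA, (1 / L) * f (L • y) :=
    (setIntegral_eq_integral_of_forall_compl_eq_zero hvan2).symm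
  have e4 : ∫ y in ΔD + L⁻¹ • ΔA, (1 / L) * f (L • y)
      = (∫ y in ΔD, (1 / L) * f (L • y))
        + ∫ y in (ΔD + L⁻¹ • ΔA) \ ΔD, (1 / L) * f (L • y) := by
    rw [← setIntegral_union disjoint_sdiff_self_right
      (hTc.isClosed.measurableSet.diff hDc.isClosed.measurableSet)
      hFlint.integrableOn hFlint.integrableOn, Set.union_diff_cancel hDsub]
  calc (1 / L ^ (n + 1)) * ∫ x in L • ΔD + ΔA, f x
      = (1 / L ^ (n + 1)) * ∫ x, f x := by rw [e1]
    _ = (1 / L) * ((L ^ n)⁻¹ * ∫ x, f x) := by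
        rw [← mul_assoc]
        congr 1
        rw [pow_succ, one_div, mul_inv, one_div]
        ring
    _ = (1 / L) * ∫ y, f (L • y) := by rw [e2]
    _ = ∫ y, (1 / L) * f (L • y) := (integral_const_mul _ _).symm
    _ = ∫ y in ΔD + L⁻¹ • ΔA, (1 / L) * f (L • y) := e3
    _ = _ := e4

end SliceEq

end Aux

open Aux Filter in
theorem stmt5 (n : ℕ) (ΔD ΔA : Set (Fin n → ℝ))
    (hDne : ΔD.Nonempty) (hDc : IsCompact ΔD) (hDconv : Convex ℝ ΔD)
    (hAne : ΔA.Nonempty) (hAc : IsCompact ΔA) (hAconv : Convex ℝ ΔA)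
    (h0A : (0 : Fin n → ℝ) ∈ ΔA)
    (gD gA : (Fin n → ℝ) → ℝ)
    (hgD : ∃ C : ℝ, ∀ u, |gD u - lsf ΔD u| ≤ C)
    (hgA : ∃ C : ℝ, ∀ u, |gA u - lsf ΔA u| ≤ C) :
    Filter.Tendsto
      (fun l : ℕ => (1 / (l : ℝ) ^ (n + 1)) *
        ∫ x in ((l : ℝ) • ΔD + ΔA),
          (lfT (fun u => (l : ℝ) * gD u + gA u) x).toReal)
      Filter.atTop (nhds (∫ x in ΔD, (lfT gD x).toReal)) := by
  obtain ⟨CD, hCD⟩ := hgD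
  obtain ⟨CA, hCA⟩ := hgA
  have hCD0 : 0 ≤ CD := le_trans (abs_nonneg _) (hCD 0)
  have hCA0 : 0 ≤ CA := le_trans (abs_nonneg _) (hCA 0)
  obtain ⟨r0, hr0⟩ := hAc.isBounded.subset_closedBall 0
  have hRnorm : ∀ w ∈ ΔA, ‖w‖ ≤ max r0 0 := fun w hw =>
    le_trans (mem_closedBall_zero_iff.1 (hr0 hw)) (le_max_left _ _)
  have hR0 : (0:ℝ) ≤ max r0 0 := le_max_right _ _
  have hRcoord : ∀ w ∈ ΔA, ∀ i, |w i| ≤ max r0 0 := fun w hw i =>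
    le_trans (by simpa using norm_le_pi_norm w i) (hRnorm w hw)
  set F : ℕ → (Fin n → ℝ) → ℝ := fun l y =>
    (1 / (l : ℝ)) * (lfT (fun u => (l : ℝ) * gD u + gA u) ((l : ℝ) • y)).toReal with hFdef
  have hFbound : ∀ (l : ℕ) (y : Fin n → ℝ), |F l y| ≤ CD + CA := by
    intro l y
    rcases Nat.eq_zero_or_pos l with rfl | hlpos
    · simp only [hFdef, Nat.cast_zero, div_zero, zero_mul, abs_zero]
      linarith
    · have hl1 : (1:ℝ) ≤ (l:ℝ) := by exact_mod_cast hlpos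
      have hl0 : (0:ℝ) < (l:ℝ) := lt_of_lt_of_le zero_lt_one hl1
      by_cases hx : (l:ℝ) • y ∈ (l:ℝ) • ΔD + ΔA
      · have h2 := (inside_toReal hDne hDc hAne hAc hCD hCA hl0.le hx).2
        have heq : |F l y| = (1/(l:ℝ))
            * |(lfT (fun u => (l:ℝ) * gD u + gA u) ((l:ℝ) • y)).toReal| := by
          simp only [hFdef]
          rw [abs_mul, abs_of_nonneg (by positivity : (0:ℝ) ≤ 1/(l:ℝ))]
        rw [heq]
        have h3 : (1/(l:ℝ)) * |(lfT (fun u => (l:ℝ) * gD u + gA u) ((l:ℝ) • y)).toReal|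
            ≤ (1/(l:ℝ)) * ((l:ℝ) * CD + CA) :=
          mul_le_mul_of_nonneg_left h2 (by positivity)
        have h4 : (1/(l:ℝ)) * ((l:ℝ) * CD + CA) = CD + CA / (l:ℝ) := by
          field_simp
        have h5 : CA / (l:ℝ) ≤ CA := div_le_self hCA0 hl1
        linarith
      · have hv := lfT_vanish hDne hDc hDconv hAne hAc hAconv hCD hCA hl0.le hx
        simp only [hFdef, hv]
        simp only [EReal.toReal_bot, mul_zero, abs_zero]
        linarith
  have hA : Tendsto (fun l : ℕ => ∫ y in ΔD, F l y) atTop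
      (𝓝 (∫ x in ΔD, (lfT gD x).toReal)) := by
    apply tendsto_integral_of_dominated_convergence (fun _ => CD + CA)
    · intro l
      apply Measurable.aestronglyMeasurable
      simp only [hFdef]
      exact ((lfT_toReal_measurable _).comp (measurable_id.const_smul ((l:ℝ)))).const_mul _
    · exact integrableOn_const hDc.measure_lt_top.ne
    · intro l
      exact Eventually.of_forall fun y => by rw [Real.norm_eq_abs]; exact hFbound l y
    · apply (ae_restrict_iff' hDc.isClosed.measurableSet).2
      apply Eventually.of_forall
      intro y hy
      simp only [hFdef]
      exact pointwise_conv hDne hDc hAne hAc hCD hCA hRcoord hCD0 hCA0 hR0 h0A hy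
  have hvol : Tendsto (fun l : ℕ =>
      (volume ((ΔD + ((l:ℝ))⁻¹ • ΔA) \ ΔD)).toReal) atTop (𝓝 0) := by
    have hth : Tendsto (fun r : ℝ => volume (Metric.cthickening r ΔD)) (𝓝 0)
        (𝓝 (volume ΔD)) :=
      tendsto_measure_cthickening_of_isClosed
        ⟨1, one_pos, (hDc.cthickening).measure_lt_top.ne⟩ hDc.isClosed
    have hdiv : Tendsto (fun l : ℕ => (max r0 0) / (l:ℝ)) atTop (𝓝 0) :=
      tendsto_const_div_atTop_nhds_zero_nat (max r0 0)
    have h4 : Tendsto (fun l : ℕ =>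
        (volume (Metric.cthickening ((max r0 0)/(l:ℝ)) ΔD)).toReal)
        atTop (𝓝 (volume ΔD).toReal) :=
      (ENNReal.tendsto_toReal hDc.measure_lt_top.ne).comp (hth.comp hdiv)
    have h5 : Tendsto (fun l : ℕ =>
        (volume (Metric.cthickening ((max r0 0)/(l:ℝ)) ΔD)).toReal
          - (volume ΔD).toReal) atTop (𝓝 0) := by
      have h6 := h4.sub_const ((volume ΔD).toReal)
      rwa [sub_self] at h6
    apply tendsto_of_tendsto_of_tendsto_of_le_of_le' tendsto_const_nhds h5
    · exact Eventually.of_forall fun l => ENNReal.toReal_nonneg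
    · refine eventually_atTop.2 ⟨1, fun l hl => ?_⟩
      have hl0 : (0:ℝ) < (l:ℝ) := by exact_mod_cast hl
      have hsub : (ΔD + ((l:ℝ))⁻¹ • ΔA) \ ΔD
          ⊆ Metric.cthickening ((max r0 0)/(l:ℝ)) ΔD \ ΔD :=
        Set.diff_subset_diff_left (add_subset_cthickening hl0 hRnorm)
      have hcth : IsCompact (Metric.cthickening ((max r0 0)/(l:ℝ)) ΔD) := hDc.cthickening
      have h7 : volume ((ΔD + ((l:ℝ))⁻¹ • ΔA) \ ΔD)
          ≤ volume (Metric.cthickening ((max r0 0)/(l:ℝ)) ΔD) - volume ΔD := by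
        refine le_trans (measure_mono hsub) ?_
        rw [measure_diff (Metric.self_subset_cthickening _)
          hDc.isClosed.measurableSet.nullMeasurableSet hDc.measure_lt_top.ne]
      have h8 := ENNReal.toReal_mono
        (ne_of_lt (lt_of_le_of_lt tsub_le_self hcth.measure_lt_top)) h7
      rwa [ENNReal.toReal_sub_of_le (measure_mono (Metric.self_subset_cthickening _))
        hcth.measure_lt_top.ne] at h8
  have hB : Tendsto (fun l : ℕ =>
      ∫ y in ((ΔD + ((l:ℝ))⁻¹ • ΔA) \ ΔD), F l y) atTop (𝓝 0) := by
    have hMvol := hvol.const_mul (CD + CA)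
    rw [mul_zero] at hMvol
    apply squeeze_zero_norm ?_ hMvol
    intro l
    have hTc : IsCompact (ΔD + ((l:ℝ))⁻¹ • ΔA) := by
      have h1 : IsCompact (((l:ℝ))⁻¹ • ΔA) := by
        rw [← Set.image_smul]; exact hAc.image (continuous_const_smul _)
      exact hDc.add h1
    have hfin : volume ((ΔD + ((l:ℝ))⁻¹ • ΔA) \ ΔD) < ⊤ :=
      lt_of_le_of_lt (measure_mono Set.diff_subset) hTc.measure_lt_top
    have hmeas : MeasurableSet ((ΔD + ((l:ℝ))⁻¹ • ΔA) \ ΔD) :=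
      hTc.isClosed.measurableSet.diff hDc.isClosed.measurableSet
    exact norm_setIntegral_le_of_norm_le_const hfin fun y _ => by
      rw [Real.norm_eq_abs]; exact hFbound l y
  have hsum := hA.add hB
  rw [add_zero] at hsum
  refine Filter.Tendsto.congr' ?_ hsum
  refine eventually_atTop.2 ⟨1, fun l hl => ?_⟩
  have hl1 : (1:ℝ) ≤ (l:ℝ) := by exact_mod_cast hl
  have hL0 : (0:ℝ) < (l:ℝ) := lt_of_lt_of_le zero_lt_one hl1
  have hse := slice_eq hDne hDc hDconv hAne hAc hAconv hCD hCA hL0 h0A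
    (gD := gD) (gA := gA)
  simp only [hFdef]
  exact hse.symm
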